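/- Every graph G on n vertices with x·n²/2 edges, where x ∈ [0,1], satisfies N(C_4, G) ≤ x(1−x)²·n⁴/8 + 2n³, where N(C_4, G) is the number of induced 4-cycles in G. -/
import Mathlib

/-- The number of induced copies of `F` in `G`. -/
noncomputable def inducedCount {α β : Type*} [Fintype α] [Fintype β]
    (F : SimpleGraph α) (G : SimpleGraph β) : ℕ :=
  Set.ncard {s : Finset β | Nonempty (G.induce (s : Set β) ≃g F)}

/-- The cycle on four vertices. -/
def C4 : SimpleGraph (Fin 4) := SimpleGraph.fromRel (fun a b => b = a + 1)

section Auxiliary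

open Finset

set_option linter.unusedSectionVars false
set_option maxHeartbeats 1000000

instance : DecidableRel C4.Adj := fun a b => by
  rw [C4, SimpleGraph.fromRel_adj]; infer_instance

lemma C4d1 : ∀ i : Fin 4, C4.Adj i (i+1) := by decide
lemma C4d2 : ∀ i : Fin 4, C4.Adj (i+1) i := by decide
lemma C4d3 : ∀ i : Fin 4, ¬ C4.Adj i (i+2) := by decide
lemma C4d4 : ∀ i : Fin 4, ¬ C4.Adj (i+1) (i+3) := by decide
lemma C4d5 : ∀ i : Fin 4, i ≠ i + 2 := by decide
lemma C4d6 : ∀ i : Fin 4, i + 1 ≠ i + 3 := by decide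
lemma C4d7 : ∀ i : Fin 4, i ≠ i + 1 + 1 := by decide
lemma C4d8 : ∀ i : Fin 4, ({i, i+1, i+2, i+3} : Finset (Fin 4)) = Finset.univ := by decide
lemma C4d9 : ∀ i : Fin 4, ({i+1, i, i+3, i+2} : Finset (Fin 4)) = Finset.univ := by decide


variable {V : Type*} [Fintype V] [DecidableEq V]

lemma sumE_eq (H : SimpleGraph V) [DecidableRel H.Adj] (F : V × V → ℝ) :
    ∑ p ∈ (univ ×ˢ univ).filter (fun p : V × V => H.Adj p.1 p.2), F p
      = ∑ a, ∑ b ∈ H.neighborFinset a, F (a, b) := by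
  rw [sum_filter, Finset.sum_product]
  refine Finset.sum_congr rfl fun a _ => ?_
  rw [← sum_filter]
  refine Finset.sum_congr ?_ fun b _ => rfl
  ext b
  simp [SimpleGraph.mem_neighborFinset]

lemma sumE_swap (H : SimpleGraph V) [DecidableRel H.Adj] (F : V × V → ℝ) :
    ∑ p ∈ (univ ×ˢ univ).filter (fun p : V × V => H.Adj p.1 p.2), F p
      = ∑ p ∈ (univ ×ˢ univ).filter (fun p : V × V => H.Adj p.1 p.2), F p.swap := by
  apply Finset.sum_nbij' (fun p => Prod.swap p) (fun p => Prod.swap p) <;>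
    simp [SimpleGraph.adj_comm]


/-- Blakley–Roy for walks of length 3. -/
lemma BR3 (H : SimpleGraph V) [DecidableRel H.Adj] :
    (∑ v, (H.degree v : ℝ)) ^ 3
      ≤ (Fintype.card V : ℝ) ^ 2 *
        ∑ p ∈ (univ ×ˢ univ).filter (fun p : V × V => H.Adj p.1 p.2),
          (H.degree p.1 : ℝ) * (H.degree p.2 : ℝ) := by
  classical
  set E := (univ ×ˢ univ).filter (fun p : V × V => H.Adj p.1 p.2) with hEdef
  set c : V → ℝ := fun v => (H.degree v : ℝ) with hc
  have hc0 : ∀ v, 0 ≤ c v := fun v => Nat.cast_nonneg _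
  -- positivity of degrees on edge endpoints
  have hpos : ∀ p ∈ E, 0 < c p.1 ∧ 0 < c p.2 := by
    intro p hp
    rw [hEdef, mem_filter] at hp
    constructor <;>
      · rw [hc]
        have := hp.2
        simp only [Nat.cast_pos, SimpleGraph.degree_pos_iff_exists_adj]
        first
          | exact ⟨p.2, hp.2⟩
          | exact ⟨p.1, hp.2.symm⟩
  set s : V → ℝ := fun v => Real.sqrt (c v) with hs
  set K : ℝ := ∑ v, c v with hK
  set W : ℝ := ∑ p ∈ E, c p.1 * c p.2 with hW
  set X : ℝ := ∑ p ∈ E, 1 / (s p.1 * s p.2) with hX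
  set Y : ℝ := ∑ p ∈ E, s p.1 * s p.2 with hY
  have hspos : ∀ p ∈ E, 0 < s p.1 * s p.2 := by
    intro p hp
    have := hpos p hp
    exact mul_pos (Real.sqrt_pos.2 this.1) (Real.sqrt_pos.2 this.2)
  have hK1 : K = ∑ p ∈ E, (1 : ℝ) := by
    rw [hK, hEdef, sumE_eq H (fun _ => (1:ℝ))]
    simp [hc, SimpleGraph.card_neighborFinset_eq_degree]
  -- K^2 ≤ Y * X
  have h1 : K ^ 2 ≤ Y * X := by
    have := Finset.sum_mul_sq_le_sq_mul_sq E (fun p => Real.sqrt (s p.1 * s p.2))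
      (fun p => 1 / Real.sqrt (s p.1 * s p.2))
    have heq : ∑ p ∈ E, Real.sqrt (s p.1 * s p.2) * (1 / Real.sqrt (s p.1 * s p.2)) = K := by
      rw [hK1]
      refine Finset.sum_congr rfl fun p hp => ?_
      have := hspos p hp
      rw [mul_one_div, div_self (Real.sqrt_ne_zero'.2 this)]
    have h2 : ∑ p ∈ E, (Real.sqrt (s p.1 * s p.2)) ^ 2 = Y := by
      rw [hY]; exact Finset.sum_congr rfl fun p hp => Real.sq_sqrt (hspos p hp).le
    have h3 : ∑ p ∈ E, (1 / Real.sqrt (s p.1 * s p.2)) ^ 2 = X := by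
      rw [hX]
      refine Finset.sum_congr rfl fun p hp => ?_
      rw [div_pow, one_pow, Real.sq_sqrt (hspos p hp).le]
    rw [heq, h2, h3] at this
    exact this
  -- Y^2 ≤ W * K
  have h2 : Y ^ 2 ≤ W * K := by
    have := Finset.sum_mul_sq_le_sq_mul_sq E (fun p => s p.1 * s p.2) (fun _ => (1:ℝ))
    simp only [mul_one, one_pow] at this
    have h4 : ∑ p ∈ E, (s p.1 * s p.2) ^ 2 = W := by
      rw [hW]
      refine Finset.sum_congr rfl fun p hp => ?_
      rw [mul_pow, hs, Real.sq_sqrt (hc0 p.1), Real.sq_sqrt (hc0 p.2)]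
    rw [h4, ← hK1, ← hY] at this
    exact this
  -- X ≤ n
  have h3 : X ≤ (Fintype.card V : ℝ) := by
    have hXle : X ≤ ∑ p ∈ E, (1/2) * (1 / c p.1 + 1 / c p.2) := by
      rw [hX]
      refine Finset.sum_le_sum fun p hp => ?_
      have h5 := hpos p hp
      have e1 : s p.1 ^ 2 = c p.1 := Real.sq_sqrt (hc0 p.1)
      have e2 : s p.2 ^ 2 = c p.2 := Real.sq_sqrt (hc0 p.2)
      have hs1 : 0 < s p.1 := Real.sqrt_pos.2 h5.1
      have hs2 : 0 < s p.2 := Real.sqrt_pos.2 h5.2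
      rw [← e1, ← e2]
      have hme : (1/2 : ℝ) * (1 / s p.1 ^ 2 + 1 / s p.2 ^ 2)
          = (s p.1 ^ 2 + s p.2 ^ 2) / (2 * (s p.1 ^2 * s p.2 ^2)) := by
        field_simp
        ring
      rw [hme, div_le_div_iff₀ (by positivity) (by positivity)]
      nlinarith [sq_nonneg (s p.1 - s p.2), mul_pos hs1 hs2, sq_nonneg (s p.1 * s p.2)]
    refine hXle.trans ?_
    have : ∑ p ∈ E, (1/2 : ℝ) * (1 / c p.1 + 1 / c p.2) = ∑ p ∈ E, 1 / c p.1 := by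
      have hsw : ∑ p ∈ E, 1 / c p.2 = ∑ p ∈ E, 1 / c p.1 := by
        rw [hEdef]
        exact sumE_swap H (fun p => 1 / c p.2)
      rw [Finset.sum_congr rfl (fun p _ => by ring :
        ∀ p ∈ E, (1/2 : ℝ) * (1 / c p.1 + 1 / c p.2) = 1/2 * (1/c p.1) + 1/2 * (1/c p.2))]
      rw [Finset.sum_add_distrib, ← Finset.mul_sum, ← Finset.mul_sum, hsw]
      ring
    rw [this, hEdef, sumE_eq H (fun p => 1 / c p.1)]
    have : ∀ a : V, ∑ _b ∈ H.neighborFinset a, 1 / c a ≤ 1 := by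
      intro a
      rw [Finset.sum_const, SimpleGraph.card_neighborFinset_eq_degree, nsmul_eq_mul]
      rcases Nat.eq_zero_or_pos (H.degree a) with h | h
      · simp [h]
      · rw [hc, mul_one_div, div_self (by exact_mod_cast h.ne')]
    calc ∑ a, ∑ _b ∈ H.neighborFinset a, 1 / c a ≤ ∑ _a : V, (1:ℝ) :=
          Finset.sum_le_sum fun a _ => this a
      _ = (Fintype.card V : ℝ) := by simp
  -- combine
  have hKnn : 0 ≤ K := Finset.sum_nonneg fun v _ => hc0 v
  have hsnn : ∀ v, 0 ≤ s v := fun v => Real.sqrt_nonneg _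
  have hXnn : 0 ≤ X := Finset.sum_nonneg fun p hp =>
    div_nonneg zero_le_one (mul_nonneg (hsnn _) (hsnn _))
  have hYnn : 0 ≤ Y := Finset.sum_nonneg fun p hp => (mul_pos (Real.sqrt_pos.2 (hpos p hp).1) (Real.sqrt_pos.2 (hpos p hp).2)).le
  have hWnn : 0 ≤ W := Finset.sum_nonneg fun p hp => mul_nonneg (hc0 _) (hc0 _)
  rcases eq_or_lt_of_le hKnn with h | hKpos
  · rw [← h]
    calc (0:ℝ)^3 = 0 := by norm_num
      _ ≤ _ := mul_nonneg (sq_nonneg _) hWnn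
  · have h4 : K ^ 4 ≤ (Fintype.card V : ℝ)^2 * W * K := by
      have : K^4 ≤ (Y * X)^2 := by
        calc K^4 = (K^2)^2 := by ring
        _ ≤ (Y*X)^2 := by nlinarith [sq_nonneg K]
      calc K^4 ≤ (Y*X)^2 := this
      _ = Y^2 * X^2 := by ring
      _ ≤ (W * K) * (Fintype.card V : ℝ)^2 := by
          apply mul_le_mul h2 _ (sq_nonneg _) (mul_nonneg hWnn hKnn)
          nlinarith
      _ = (Fintype.card V : ℝ)^2 * W * K := by ring
    have := le_of_mul_le_mul_right (by nlinarith : K^3 * K ≤ ((Fintype.card V:ℝ)^2 * W) * K) hKpos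
    linarith

lemma split_sum (G : SimpleGraph V) [DecidableRel G.Adj] (c : V → ℝ) :
    (∑ v, c v) ^ 2 =
      (∑ v, c v ^ 2)
      + (∑ p ∈ (univ ×ˢ univ).filter (fun p : V × V => G.Adj p.1 p.2), c p.1 * c p.2)
      + (∑ p ∈ (univ ×ˢ univ).filter (fun p : V × V => Gᶜ.Adj p.1 p.2), c p.1 * c p.2) := by
  classical
  have h0 : (∑ v, c v) ^ 2 = ∑ p ∈ (univ ×ˢ univ : Finset (V × V)), c p.1 * c p.2 := by
    rw [sq, Finset.sum_mul_sum, ← Finset.sum_product']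
  rw [h0, ← Finset.sum_filter_add_sum_filter_not (univ ×ˢ univ)
    (fun p : V × V => p.1 = p.2) (fun p => c p.1 * c p.2)]
  have h1 : (univ ×ˢ univ : Finset (V × V)).filter (fun p => p.1 = p.2)
      = univ.image (fun v => (v, v)) := by
    ext p
    simp only [mem_filter, mem_product, mem_univ, true_and, mem_image]
    constructor
    · rintro h; exact ⟨p.1, by simp [Prod.ext_iff, h.symm]⟩
    · rintro ⟨v, hv⟩; simp [← hv]
  have h2 : ∑ p ∈ (univ ×ˢ univ : Finset (V × V)).filter (fun p => p.1 = p.2),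
      c p.1 * c p.2 = ∑ v, c v ^ 2 := by
    rw [h1, Finset.sum_image (by intro a _ b _ h; simpa [Prod.ext_iff] using h)]
    simp [sq]
  have h3 : ∑ p ∈ (univ ×ˢ univ : Finset (V × V)).filter (fun p => ¬ p.1 = p.2),
      c p.1 * c p.2
      = (∑ p ∈ (univ ×ˢ univ).filter (fun p : V × V => G.Adj p.1 p.2), c p.1 * c p.2)
      + (∑ p ∈ (univ ×ˢ univ).filter (fun p : V × V => Gᶜ.Adj p.1 p.2), c p.1 * c p.2) := by
    have e1 : ((univ ×ˢ univ : Finset (V × V)).filter (fun p => ¬ p.1 = p.2)).filter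
        (fun p : V × V => G.Adj p.1 p.2)
        = (univ ×ˢ univ : Finset (V × V)).filter (fun p : V × V => G.Adj p.1 p.2) := by
      rw [Finset.filter_filter]
      apply Finset.filter_congr
      intro p _
      exact ⟨fun h => h.2, fun h => ⟨h.ne, h⟩⟩
    have e2 : ((univ ×ˢ univ : Finset (V × V)).filter (fun p => ¬ p.1 = p.2)).filter
        (fun p : V × V => ¬ G.Adj p.1 p.2)
        = (univ ×ˢ univ : Finset (V × V)).filter (fun p : V × V => Gᶜ.Adj p.1 p.2) := by
      rw [Finset.filter_filter]
      apply Finset.filter_congr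
      intro p _
      rw [SimpleGraph.compl_adj]
    rw [← Finset.sum_filter_add_sum_filter_not
      ((univ ×ˢ univ : Finset (V × V)).filter (fun p => ¬ p.1 = p.2))
      (fun p : V × V => G.Adj p.1 p.2) (fun p => c p.1 * c p.2), e1, e2]
  rw [h2, h3]
  ring

lemma count_le (G : SimpleGraph V) [DecidableRel G.Adj] :
    inducedCount C4 G * 8 ≤
      ∑ p ∈ (univ ×ˢ univ).filter (fun p : V × V => G.Adj p.1 p.2),
        Gᶜ.degree p.1 * Gᶜ.degree p.2 := by
  classical
  set P : Finset V → Prop := fun s => Nonempty (G.induce (s : Set V) ≃g C4) with hP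
  have hN : inducedCount C4 G = (univ.filter P).card := by
    rw [inducedCount, Set.ncard_eq_toFinset_card', Set.toFinset_setOf]
  set T : Finset (V × V × V × V) := univ.filter
    (fun t : V × V × V × V => G.Adj t.1 t.2.1 ∧ Gᶜ.Adj t.1 t.2.2.1 ∧ Gᶜ.Adj t.2.1 t.2.2.2)
    with hT
  set r : Finset V → V × V × V × V → Prop :=
    fun s t => ({t.1, t.2.1, t.2.2.1, t.2.2.2} : Finset V) = s with hr
  have main : (univ.filter P).card * 8 ≤ T.card * 1 := by
    apply Finset.card_mul_le_card_mul r
    · -- each C4-set has ≥ 8 tuples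
      intro s hs
      obtain ⟨e⟩ := (mem_filter.mp hs).2
      set σ : C4 ≃g G.induce (s : Set V) := e.symm with hσ
      set φ : Fin 4 → V := fun i => (σ i : V) with hφ
      have hφinj : Function.Injective φ := fun i j h =>
        σ.toEquiv.injective (Subtype.val_injective h)
      have hφs : ∀ i, φ i ∈ s := fun i => (σ i).2
      have hadj : ∀ i j, G.Adj (φ i) (φ j) ↔ C4.Adj i j := by
        intro i j
        rw [← σ.map_adj_iff]
        exact Iff.rfl
      have hscard : s.card = 4 := by
        have h1 : Fintype.card (s : Set V) = Fintype.card (Fin 4) :=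
          Fintype.card_congr σ.toEquiv.symm
        simpa using h1
      have key : ∀ j k l m : Fin 4, ({j, k, l, m} : Finset (Fin 4)) = univ →
          j ≠ l → k ≠ m → C4.Adj j k → ¬ C4.Adj j l → ¬ C4.Adj k m →
          (φ j, φ k, φ l, φ m) ∈ T.bipartiteAbove r s := by
        intro j k l m huniv hjl hkm hadjk hnadjl hnadkm
        rw [Finset.mem_bipartiteAbove]
        constructor
        · rw [hT, mem_filter]
          refine ⟨mem_univ _, ?_, ?_, ?_⟩
          · exact (hadj j k).mpr hadjk
          · exact ⟨fun h => hjl (hφinj h), fun h => hnadjl ((hadj j l).mp h)⟩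
          · exact ⟨fun h => hkm (hφinj h), fun h => hnadkm ((hadj k m).mp h)⟩
        · show ({φ j, φ k, φ l, φ m} : Finset V) = s
          have himg : ({φ j, φ k, φ l, φ m} : Finset V) = ({j, k, l, m} : Finset (Fin 4)).image φ := by
            simp [Finset.image_insert]
          rw [himg, huniv]
          apply Finset.eq_of_subset_of_card_le
          · intro v hv
            obtain ⟨i, _, hi⟩ := Finset.mem_image.mp hv
            exact hi ▸ hφs i
          · rw [Finset.card_image_of_injective _ hφinj, hscard]
            simp
      set ψ : Fin 4 × Bool → V × V × V × V := fun q =>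
        if q.2 then (φ q.1, φ (q.1+1), φ (q.1+2), φ (q.1+3))
        else (φ (q.1+1), φ q.1, φ (q.1+3), φ (q.1+2)) with hψ
      have hmaps : ∀ q : Fin 4 × Bool, ψ q ∈ T.bipartiteAbove r s := by
        rintro ⟨i, b⟩
        cases b
        · show (φ (i+1), φ i, φ (i+3), φ (i+2)) ∈ _
          exact key (i+1) i (i+3) (i+2) (C4d9 i) (C4d6 i) (C4d5 i) (C4d2 i) (C4d4 i) (C4d3 i)
        · show (φ i, φ (i+1), φ (i+2), φ (i+3)) ∈ _
          exact key i (i+1) (i+2) (i+3) (C4d8 i) (C4d5 i) (C4d6 i) (C4d1 i) (C4d3 i) (C4d4 i)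
      have hinj : Set.InjOn ψ (univ : Finset (Fin 4 × Bool)) := by
        rintro ⟨i, bi⟩ - ⟨j, bj⟩ - h
        cases bi <;> cases bj <;>
          simp only [hψ, if_true, if_false, Bool.false_eq_true, Prod.mk.injEq] at h
        · have e1 := add_right_cancel (hφinj h.1)
          rw [e1]
        · exfalso
          have e1 := hφinj h.1
          have e2 := hφinj h.2.1
          rw [e2] at e1
          exact C4d7 j e1.symm
        · exfalso
          have e1 := hφinj h.1
          have e2 := hφinj h.2.1
          rw [← e2] at e1
          exact C4d7 i e1
        · rw [hφinj h.1]
      have h8 : (univ : Finset (Fin 4 × Bool)).card = 8 := by decide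
      calc 8 = (univ : Finset (Fin 4 × Bool)).card := h8.symm
        _ ≤ (T.bipartiteAbove r s).card :=
            Finset.card_le_card_of_injOn ψ (fun q _ => hmaps q) hinj
    · -- each tuple belongs to ≤ 1 set
      intro t _
      apply Finset.card_le_one.mpr
      intro a ha b hb
      rw [Finset.mem_bipartiteBelow] at ha hb
      rw [← ha.2, ← hb.2]
  -- now bound T.card
  have hTcard : T.card ≤
      ∑ p ∈ (univ ×ˢ univ).filter (fun p : V × V => G.Adj p.1 p.2),
        Gᶜ.degree p.1 * Gᶜ.degree p.2 := by
    have hsub : T ⊆ ((univ ×ˢ univ).filter (fun p : V × V => G.Adj p.1 p.2)).biUnion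
        (fun p => {p.1} ×ˢ {p.2} ×ˢ (Gᶜ.neighborFinset p.1) ×ˢ (Gᶜ.neighborFinset p.2)) := by
      rintro ⟨a, u, b, w⟩ ht
      rw [hT, mem_filter] at ht
      obtain ⟨-, h1, h2, h3⟩ := ht
      rw [Finset.mem_biUnion]
      refine ⟨(a, u), by simp [h1], ?_⟩
      simp only [Finset.mem_product, Finset.mem_singleton, SimpleGraph.mem_neighborFinset]
      exact ⟨trivial, trivial, h2, h3⟩
    calc T.card ≤ _ := Finset.card_le_card hsub
      _ ≤ ∑ p ∈ (univ ×ˢ univ).filter (fun p : V × V => G.Adj p.1 p.2),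
          ({p.1} ×ˢ {p.2} ×ˢ (Gᶜ.neighborFinset p.1) ×ˢ (Gᶜ.neighborFinset p.2)).card :=
          Finset.card_biUnion_le
      _ = _ := by
          refine Finset.sum_congr rfl fun p _ => ?_
          simp [Finset.card_product, SimpleGraph.card_neighborFinset_eq_degree]
  rw [hN]
  calc (univ.filter P).card * 8 ≤ T.card * 1 := main
    _ = T.card := mul_one _
    _ ≤ _ := hTcard

end Auxiliary

open Finset in
set_option maxHeartbeats 1000000 in
/-- Every graph `G` on `n` vertices with `x·n²/2` edges, `x ∈ [0,1]`, has at most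
`x(1−x)²·n⁴/8 + 2n³` induced four-cycles. -/
theorem stmt3 {V : Type*} [Fintype V] (G : SimpleGraph V) (n : ℕ) (x : ℝ)
    (hn : n = Fintype.card V) (hx0 : 0 ≤ x) (hx1 : x ≤ 1)
    (hE : (G.edgeSet.ncard : ℝ) = x * n ^ 2 / 2) :
    (inducedCount C4 G : ℝ) ≤ x * (1 - x) ^ 2 * n ^ 4 / 8 + 2 * n ^ 3 := by
  classical
  rcases Nat.eq_zero_or_pos n with hn0 | hnpos
  · -- empty graph case
    have hVempty : IsEmpty V := by
      rw [← Fintype.card_eq_zero_iff, ← hn, hn0]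
    have hzero : inducedCount C4 G = 0 := by
      rw [inducedCount]
      convert Set.ncard_empty (Finset V)
      rw [Set.eq_empty_iff_forall_notMem]
      rintro s ⟨e⟩
      exact hVempty.false (e.symm 0 : (s : Set V)).1
    rw [hzero, hn0]
    norm_num
  · -- main case
    set c : V → ℝ := fun v => (Gᶜ.degree v : ℝ) with hc
    set nn : ℝ := (n : ℝ) with hnn
    have hnn1 : (1 : ℝ) ≤ nn := by
      rw [hnn]
      have : 1 ≤ n := hnpos
      exact_mod_cast this
    set K : ℝ := ∑ v, c v with hK
    set Q : ℝ := ∑ v, c v ^ 2 with hQ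
    set S : ℝ := ∑ p ∈ (univ ×ˢ univ).filter (fun p : V × V => G.Adj p.1 p.2),
      c p.1 * c p.2 with hS
    set W : ℝ := ∑ p ∈ (univ ×ˢ univ).filter (fun p : V × V => Gᶜ.Adj p.1 p.2),
      c p.1 * c p.2 with hW
    set D : ℝ := ∑ v, (G.degree v : ℝ) with hD
    set N : ℝ := (inducedCount C4 G : ℝ) with hN
    -- counting bound
    have hcount : N * 8 ≤ S := by
      have h := count_le G
      have h2 : ((inducedCount C4 G * 8 : ℕ) : ℝ) ≤
          ((∑ p ∈ (univ ×ˢ univ).filter (fun p : V × V => G.Adj p.1 p.2),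
            Gᶜ.degree p.1 * Gᶜ.degree p.2 : ℕ) : ℝ) := by exact_mod_cast h
      rw [hN, hS]
      push_cast at h2
      convert h2 using 2
    -- identity
    have hsplit : K ^ 2 = Q + S + W := split_sum G c
    -- Cauchy-Schwarz
    have hCS : K ^ 2 ≤ nn * Q := by
      have := sq_sum_le_card_mul_sum_sq (s := (univ : Finset V)) (f := c)
      rw [Finset.card_univ, ← hn] at this
      exact_mod_cast this
    -- Blakley-Roy
    have hBR : K ^ 3 ≤ nn ^ 2 * W := by
      have := BR3 Gᶜ
      rw [← hn] at this
      exact this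
    -- degree sum
    have hDx : D = x * nn ^ 2 := by
      have h1 : ∑ v, G.degree v = 2 * G.edgeFinset.card :=
        SimpleGraph.sum_degrees_eq_twice_card_edges G
      have h2 : (G.edgeSet.ncard : ℝ) = (G.edgeFinset.card : ℝ) := by
        rw [← SimpleGraph.coe_edgeFinset, Set.ncard_coe_finset]
      rw [hD]
      have h3 : D = ((∑ v, G.degree v : ℕ) : ℝ) := by rw [hD]; push_cast; rfl
      rw [← hD, h3, h1]
      push_cast
      rw [← h2, hE]
      ring
    -- K + D = n(n-1)
    have hKD : K + D = nn * (nn - 1) := by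
      have hver : ∀ v : V, (Gᶜ.degree v : ℝ) + (G.degree v : ℝ) = nn - 1 := by
        intro v
        have h1 : Gᶜ.degree v = Fintype.card V - 1 - G.degree v :=
          SimpleGraph.degree_compl G v
        have h2 : G.degree v < Fintype.card V := G.degree_lt_card_verts v
        rw [← hn] at h1 h2
        have h3 : Gᶜ.degree v + G.degree v = n - 1 := by omega
        calc ((Gᶜ.degree v : ℝ) + (G.degree v : ℝ))
            = ((Gᶜ.degree v + G.degree v : ℕ) : ℝ) := by push_cast; ring
          _ = ((n - 1 : ℕ) : ℝ) := by rw [h3]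
          _ = nn - 1 := by rw [Nat.cast_sub (by omega : 1 ≤ n), Nat.cast_one]
      rw [hK, hD, ← Finset.sum_add_distrib]
      rw [Finset.sum_congr rfl (fun v _ => hver v), Finset.sum_const, Finset.card_univ, ← hn]
      rw [nsmul_eq_mul]
      first
        | ring
        | rfl
        | skip
    -- positivity facts
    have hK0 : 0 ≤ K := Finset.sum_nonneg fun v _ => Nat.cast_nonneg _
    have hD0 : 0 ≤ D := Finset.sum_nonneg fun v _ => Nat.cast_nonneg _
    have hW0 : 0 ≤ W := Finset.sum_nonneg fun p _ =>
      mul_nonneg (Nat.cast_nonneg _) (Nat.cast_nonneg _)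
    -- polynomial estimate
    have hKle : K ≤ nn ^ 2 - nn := by nlinarith [hKD, hD0]
    have hpoly : nn ^ 2 * K ^ 2 - nn * K ^ 2 - K ^ 3 ≤ D * (K + nn) ^ 2 + 16 * nn ^ 5 := by
      have hDK : D = nn ^ 2 - nn - K := by linarith [hKD]
      rw [hDK]
      nlinarith [mul_nonneg (mul_nonneg hK0 (by linarith : (0:ℝ) ≤ nn))
          (by nlinarith : (0:ℝ) ≤ nn ^ 2 - K),
        mul_nonneg (by nlinarith : (0:ℝ) ≤ nn ^ 2 - nn - K) (sq_nonneg nn),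
        mul_nonneg (by linarith : (0:ℝ) ≤ nn - 1) (by positivity : (0:ℝ) ≤ nn ^ 4),
        sq_nonneg K, sq_nonneg (K - nn ^ 2), hK0, hnn1]
    -- chain
    have hchain : 8 * nn ^ 2 * N ≤ D * (K + nn) ^ 2 + 16 * nn ^ 5 := by
      have h1 : 8 * N ≤ K ^ 2 - Q - W := by linarith [hcount, hsplit]
      have h2 : nn ^ 2 * (8 * N) ≤ nn ^ 2 * (K ^ 2 - Q - W) :=
        mul_le_mul_of_nonneg_left h1 (by positivity)
      have h3 : nn * K ^ 2 ≤ nn ^ 2 * Q := by nlinarith [hCS, hnn1]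
      have h4 : nn ^ 2 * (K ^ 2 - Q - W) ≤ nn ^ 2 * K ^ 2 - nn * K ^ 2 - K ^ 3 := by
        have : nn ^ 2 * W ≥ K ^ 3 := hBR
        nlinarith [h3]
      calc 8 * nn ^ 2 * N = nn ^ 2 * (8 * N) := by ring
        _ ≤ nn ^ 2 * (K ^ 2 - Q - W) := h2
        _ ≤ nn ^ 2 * K ^ 2 - nn * K ^ 2 - K ^ 3 := h4
        _ ≤ D * (K + nn) ^ 2 + 16 * nn ^ 5 := hpoly
    -- final
    have hKn : K + nn = nn ^ 2 - x * nn ^ 2 := by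
      rw [← hDx]; linarith [hKD]
    have hfinal : 8 * nn ^ 2 * N ≤ x * (1 - x) ^ 2 * nn ^ 6 + 16 * nn ^ 5 := by
      have : D * (K + nn) ^ 2 = x * (1 - x) ^ 2 * nn ^ 6 := by
        rw [hKn, hDx]; ring
      linarith [hchain, this.symm.le]
    have hgoal : N ≤ x * (1 - x) ^ 2 * nn ^ 4 / 8 + 2 * nn ^ 3 := by
      have hpos : (0:ℝ) < 8 * nn ^ 2 := by positivity
      have heq : x * (1 - x) ^ 2 * nn ^ 6 + 16 * nn ^ 5
          = (x * (1 - x) ^ 2 * nn ^ 4 / 8 + 2 * nn ^ 3) * (8 * nn ^ 2) := by ring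
      rw [heq] at hfinal
      have h5 : N * (8 * nn ^ 2) ≤ (x * (1 - x) ^ 2 * nn ^ 4 / 8 + 2 * nn ^ 3) * (8 * nn ^ 2) := by
        linarith [hfinal]
      exact le_of_mul_le_mul_right h5 hpos
    exact hgoal
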